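/- The infinite-concatenation map h : ewn(Σ)^ω → Σ^ω, equipping the countable set ewn(Σ) with the discrete topology and ewn(Σ)^ω with the product topology, is a homeomorphism onto the subspace of well-nested infinite strings of Σ^ω; in particular, if ewn(Σ) is countably infinite, the set of well-nested infinite strings with the subspace topology is homeomorphic to the Baire space ℕ^ℕ. -/

import Mathlib

/-- Classification of alphabet symbols: left bracket, right bracket, or neutral. -/
inductive Kind : Type
  | left | right | neutral
deriving DecidableEq

/-- The set of well-nested finite strings over an alphabet `A` classified by `k`. -/
inductive WN {A : Type} (k : A → Kind) : List A → Prop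
  | nil : WN k []
  | neutral (c : A) : k c = Kind.neutral → WN k [c]
  | append {u v : List A} : WN k u → WN k v → WN k (u ++ v)
  | enclose (l r : A) {u : List A} : k l = Kind.left → k r = Kind.right →
      WN k u → WN k (l :: u ++ [r])

/-- Elementary well-nested strings: a neutral symbol, or a well-nested string in brackets. -/
def EWN {A : Type} (k : A → Kind) : Set (List A) :=
  {w | (∃ c, k c = Kind.neutral ∧ w = [c]) ∨
       ∃ l r u, k l = Kind.left ∧ k r = Kind.right ∧ WN k u ∧ w = l :: u ++ [r]}

/-- `u` is a prefix of the infinite string `α`. -/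
def FunPrefix {A : Type} (u : List A) (α : ℕ → A) : Prop :=
  ∀ i : ℕ, ∀ h : i < u.length, u.get ⟨i, h⟩ = α i

/-- The infinite string `α` is the infinite concatenation of the finite strings `x 0, x 1, …`. -/
def Concats {A : Type} (x : ℕ → List A) (α : ℕ → A) : Prop :=
  ∀ n : ℕ, FunPrefix ((List.range n).flatMap x) α

/-- An infinite string is well-nested if it is an infinite concatenation of
elementary well-nested finite strings. -/
def WNomega {A : Type} (k : A → Kind) (α : ℕ → A) : Prop :=
  ∃ x : ℕ → List A, (∀ i, x i ∈ EWN k) ∧ Concats x α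

namespace WNAux

variable {A : Type} {k : A → Kind}

/-- Bracket balance of a finite string. -/
def bal (k : A → Kind) (w : List A) : ℤ :=
  (w.map fun c => match k c with | Kind.left => 1 | Kind.right => -1 | Kind.neutral => 0).sum

lemma bal_append (u v : List A) : bal k (u ++ v) = bal k u + bal k v := by
  simp [bal]

lemma bal_take_append (u v : List A) (n : ℕ) :
    bal k ((u ++ v).take n) = bal k (u.take n) + bal k (v.take (n - u.length)) := by
  rw [List.take_append, bal_append]

lemma wn_bal {u : List A} (h : WN k u) :
    bal k u = 0 ∧ ∀ n, 0 ≤ bal k (u.take n) := by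
  induction h with
  | nil => refine ⟨by simp [bal], fun n => by simp [bal]⟩
  | neutral c hc =>
    refine ⟨by simp [bal, hc], fun n => ?_⟩
    cases n <;> simp [bal, hc]
  | append hu hv ihu ihv =>
    refine ⟨by rw [bal_append, ihu.1, ihv.1]; ring, fun n => ?_⟩
    rw [bal_take_append]
    exact add_nonneg (ihu.2 n) (ihv.2 _)
  | enclose l r hl hr hu ih =>
    rename_i v
    constructor
    · have h0 : (l :: v ++ [r] : List A) = [l] ++ v ++ [r] := rfl
      rw [h0, bal_append, bal_append]
      have : bal k ([l] : List A) = 1 := by simp [bal, hl]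
      have h2 : bal k ([r] : List A) = -1 := by simp [bal, hr]
      rw [this, h2, ih.1]
      ring
    · intro n
      cases n with
      | zero => simp [bal]
      | succ m =>
        have h1 : 0 ≤ bal k (v.take m) := ih.2 m
        have h2 : -1 ≤ bal k (([r] : List A).take (m - v.length)) := by
          cases (m - v.length : ℕ) with
          | zero => simp [bal]
          | succ j => simp [bal, hr]
        have h3 : (l :: v ++ [r] : List A).take (m+1) = l :: ((v ++ [r] : List A).take m) := by
          simp
        rw [h3]
        have h4 : bal k (l :: (v ++ [r] : List A).take m)
            = 1 + bal k ((v ++ [r] : List A).take m) := by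
          simp [bal, hl]
        rw [h4, bal_take_append]
        linarith

lemma ewn_ne_nil {w : List A} (hw : w ∈ EWN k) : w ≠ [] := by
  rcases hw with ⟨c, _, rfl⟩ | ⟨l, r, u, _, _, _, rfl⟩ <;> simp

/-- Prefix determinism: an EWN word that is a prefix of another EWN word equals it. -/
lemma ewn_prefix {w w' : List A} (hw : w ∈ EWN k) (hw' : w' ∈ EWN k)
    (hp : w <+: w') : w = w' := by
  rcases hw with ⟨c, hc, rfl⟩ | ⟨l, r, u, hl, hr, hu, rfl⟩ <;>
    rcases hw' with ⟨c', hc', rfl⟩ | ⟨l', r', u', hl', hr', hu', rfl⟩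
  · obtain ⟨t, ht⟩ := hp
    simp at ht
    rw [ht.1]
  · obtain ⟨t, ht⟩ := hp
    have : c = l' := by
      have := congrArg (fun l => l.head?) ht
      simpa using this
    rw [this, hl'] at hc; cases hc
  · obtain ⟨t, ht⟩ := hp
    have : l = c' := by
      have := congrArg (fun l => l.head?) ht
      simpa using this
    rw [this, hc'] at hl; cases hl
  · obtain ⟨t, ht⟩ := hp
    by_cases hT : t = []
    · subst hT; simpa using ht
    · exfalso
      have hlen : u.length + (t.length + 1) = u'.length + 1 := by
        simpa using congrArg List.length ht
      have htpos : 1 ≤ t.length := by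
        cases t with
        | nil => exact absurd rfl hT
        | cons a t => simp
      have hle : u.length + 1 ≤ u'.length := by omega
      -- u ++ [r] is a take of u'
      have h1 : ((u ++ [r]) ++ t).take (u.length + 1) = u ++ [r] := by
        have : ((u ++ [r]) ++ t).take (u ++ [r]).length = u ++ [r] := List.take_left
        simpa using this
      have h2 : (l' :: u' ++ [r']) = l' :: (u' ++ [r']) := by simp
      have ht' : (u ++ [r]) ++ t = u' ++ [r'] := by
        have : l :: ((u ++ [r]) ++ t) = l' :: (u' ++ [r']) := by
          simpa using ht
        exact (List.cons_eq_cons.mp this).2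
      have h3 : u ++ [r] = (u' ++ [r']).take (u.length + 1) := by
        rw [← ht', h1]
      rw [List.take_append_of_le_length hle] at h3
      have hbal : bal k (u ++ [r]) = -1 := by
        rw [bal_append, (wn_bal hu).1]
        simp [bal, hr]
      have := (wn_bal hu').2 (u.length + 1)
      rw [← h3, hbal] at this
      omega

lemma prefix_of_forall {u v : List A} (hlen : u.length ≤ v.length)
    (h : ∀ i (hi : i < u.length), u[i] = v[i]'(lt_of_lt_of_le hi hlen)) : u <+: v := by
  rw [List.prefix_iff_eq_take]
  apply List.ext_getElem
  · simp [Nat.min_eq_left hlen]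
  · intro i h1 h2
    rw [List.getElem_take]
    exact h i h1

/-- Partial concatenations. -/
def L (x : ℕ → List A) (n : ℕ) : List A := (List.range n).flatMap x

lemma L_succ (x : ℕ → List A) (n : ℕ) : L x (n+1) = L x n ++ x n := by
  simp [L, List.range_succ]

lemma L_prefix (x : ℕ → List A) {m n : ℕ} (h : m ≤ n) : L x m <+: L x n := by
  induction n, h using Nat.le_induction with
  | base => exact List.prefix_refl _
  | succ n hn ih =>
    rw [L_succ]
    exact ih.trans (List.prefix_append _ _)

lemma L_congr {x y : ℕ → List A} {n : ℕ} (h : ∀ m < n, x m = y m) :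
    L x n = L y n := by
  induction n with
  | zero => rfl
  | succ n ih =>
    rw [L_succ, L_succ, ih (fun m hm => h m (by omega)), h n (by omega)]

lemma le_length_L {x : ℕ → List A} (hx : ∀ i, x i ≠ []) (n : ℕ) :
    n ≤ (L x n).length := by
  induction n with
  | zero => simp
  | succ n ih =>
    rw [L_succ, List.length_append]
    have := List.length_pos_iff.mpr (hx n)
    omega

lemma concats_getElem {x : ℕ → List A} {α : ℕ → A} (h : Concats x α)
    (n i : ℕ) (hi : i < (L x n).length) : (L x n)[i] = α i := by
  have := h n i hi
  simpa [L, List.get_eq_getElem] using this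

lemma concats_unique_out {x : ℕ → List A} {α β : ℕ → A} (hx : ∀ i, x i ≠ [])
    (hα : Concats x α) (hβ : Concats x β) : α = β := by
  funext n
  have hlen : n < (L x (n+1)).length := lt_of_lt_of_le (by omega) (le_length_L hx (n+1))
  rw [← concats_getElem hα (n+1) n hlen, concats_getElem hβ (n+1) n hlen]

/-- The infinite concatenation of a sequence of EWN words. -/
def conc (x : ℕ → {w : List A // w ∈ EWN k}) (n : ℕ) : A :=
  (L (fun i => (x i).1) (n+1)).get ⟨n, lt_of_lt_of_le (by omega)
    (le_length_L (fun i => ewn_ne_nil (x i).2) (n+1))⟩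

lemma L_getElem_eq (x : ℕ → List A) {m m' i : ℕ} (h : i < (L x m).length)
    (h' : i < (L x m').length) : (L x m)[i] = (L x m')[i] := by
  rcases le_total m m' with hm | hm
  · exact (L_prefix x hm).getElem h
  · exact ((L_prefix x hm).getElem h').symm

lemma conc_concats (x : ℕ → {w : List A // w ∈ EWN k}) :
    Concats (fun i => (x i).1) (conc x) := by
  intro n i hi
  rw [List.get_eq_getElem]
  exact L_getElem_eq _ hi _

lemma conc_congr {x y : ℕ → {w : List A // w ∈ EWN k}} {n : ℕ}
    (h : ∀ i ≤ n, x i = y i) : conc x n = conc y n := by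
  have hL : L (fun i => (x i).1) (n+1) = L (fun i => (y i).1) (n+1) :=
    L_congr (fun m hm => by rw [h m (by omega)])
  simp only [conc, List.get_eq_getElem]
  congr 1

lemma getElem_L_succ (x : ℕ → List A) (j i' : ℕ) (h : i' < (x j).length)
    (h2 : (L x j).length + i' < (L x (j+1)).length) :
    (L x (j+1))[(L x j).length + i'] = (x j)[i'] := by
  have h5 := List.getElem_of_eq (L_succ x j) h2
  rw [h5, List.getElem_append_right (by omega)]
  congr 1
  omega

/-- Key stability lemma: decompositions of strings agreeing on a long enough
prefix agree on initial factors. -/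
lemma stability {x y : ℕ → List A} {α β : ℕ → A} {N : ℕ}
    (hx : ∀ i, x i ∈ EWN k) (hy : ∀ i, y i ∈ EWN k)
    (hcx : Concats x α) (hcy : Concats y β)
    (hagree : ∀ j < N, α j = β j)
    {i : ℕ} (hN : (L x (i+1)).length ≤ N) :
    ∀ j ≤ i, x j = y j := by
  intro j
  induction j using Nat.strong_induction_on with
  | _ j ih =>
    intro hj
    have heq : L x j = L y j := L_congr (fun m hm => ih m hm (by omega))
    have hq : (L y j).length = (L x j).length := by rw [heq]
    set p := (L x j).length with hp
    have hpu : p + (x j).length ≤ N := by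
      have h1 : (L x (j+1)).length ≤ (L x (i+1)).length :=
        (L_prefix x (by omega)).length_le
      rw [L_succ, List.length_append] at h1
      omega
    have hxj : ∀ i' (h : i' < (x j).length), (x j)[i'] = α (p + i') := by
      intro i' h
      have h2 : p + i' < (L x (j+1)).length := by
        rw [L_succ, List.length_append]; omega
      have h3 := concats_getElem hcx (j+1) (p+i') h2
      rw [← h3]
      exact (getElem_L_succ x j i' h (by rw [← hp]; exact h2)).symm
    have hyj : ∀ i' (h : i' < (y j).length), (y j)[i'] = β (p + i') := by
      intro i' h
      have h2 : p + i' < (L y (j+1)).length := by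
        rw [L_succ, List.length_append, hq]; omega
      have h3 := concats_getElem hcy (j+1) (p+i') h2
      rw [← h3]
      have h4 := getElem_L_succ y j i' h (by rw [hq]; exact h2)
      rw [← h4]
      congr 1
      omega
    rcases le_total (x j).length (y j).length with hle | hle
    · refine ewn_prefix (hx j) (hy j) (prefix_of_forall hle ?_)
      intro i' hi'
      rw [hxj i' hi', hyj i' (lt_of_lt_of_le hi' hle), hagree (p+i') (by omega)]
    · refine (ewn_prefix (hy j) (hx j) (prefix_of_forall hle ?_)).symm
      intro i' hi'
      rw [hyj i' hi', hxj i' (lt_of_lt_of_le hi' hle),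
        hagree (p+i') (by omega)]

end WNAux
open WNAux in
theorem wnomega_homeomorphic_to_product_and_baire
    {A : Type} [TopologicalSpace A] [DiscreteTopology A]
    [TopologicalSpace (List A)] [DiscreteTopology (List A)]
    (k : A → Kind) :
    ∃ h : (ℕ → {w : List A // w ∈ EWN k}) ≃ₜ {α : ℕ → A // WNomega k α},
      (∀ x : ℕ → {w : List A // w ∈ EWN k},
        Concats (fun i => (x i).1) (h x).1) ∧
      (Countable {w : List A // w ∈ EWN k} → Infinite {w : List A // w ∈ EWN k} →
        Nonempty ({α : ℕ → A // WNomega k α} ≃ₜ (ℕ → ℕ))) := by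
  classical
  -- the forward map
  set S := {w : List A // w ∈ EWN k}
  let toF : (ℕ → S) → {α : ℕ → A // WNomega k α} := fun x =>
    ⟨conc x, ⟨fun i => (x i).1, fun i => (x i).2, conc_concats x⟩⟩
  let invF : {α : ℕ → A // WNomega k α} → (ℕ → S) := fun α i =>
    ⟨Classical.choose α.2 i, (Classical.choose_spec α.2).1 i⟩
  have left_inv : Function.LeftInverse invF toF := by
    intro x
    funext i
    apply Subtype.ext
    have hspec := Classical.choose_spec (toF x).2
    have := stability (k := k) (x := fun i => (x i).1) (y := Classical.choose (toF x).2)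
      (α := conc x) (β := conc x) (N := (L (fun i => (x i).1) (i+1)).length)
      (fun i => (x i).2) hspec.1 (conc_concats x) hspec.2
      (fun _ _ => rfl) le_rfl i le_rfl
    exact this.symm
  have right_inv : Function.RightInverse invF toF := by
    intro α
    apply Subtype.ext
    have hspec := Classical.choose_spec α.2
    exact concats_unique_out (x := Classical.choose α.2)
      (fun i => ewn_ne_nil (hspec.1 i)) (conc_concats (invF α)) hspec.2
  have cont_to : Continuous toF := by
    apply Continuous.subtype_mk
    apply continuous_pi
    intro n
    have hres : Continuous (fun x : ℕ → S => (fun i : Fin (n+1) => x i.1)) :=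
      continuous_pi fun i => continuous_apply _
    have hfac : (fun x : ℕ → S => conc x n) =
        (fun v : Fin (n+1) → S => conc (fun i => v ⟨min i n, Nat.lt_succ_of_le (Nat.min_le_right i n)⟩) n) ∘
          (fun x (i : Fin (n+1)) => x i.1) := by
      funext x
      exact (conc_congr (fun i hi => by simp [Nat.min_eq_left hi])).symm
    rw [hfac]
    exact continuous_of_discreteTopology.comp hres
  have cont_inv : Continuous invF := by
    apply continuous_pi
    intro i
    rw [continuous_discrete_rng]
    intro w
    apply isOpen_iff_forall_mem_open.mpr
    intro α hα
    have hspecα := Classical.choose_spec α.2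
    set N := (L (Classical.choose α.2) (i+1)).length with hN
    refine ⟨{β : {α : ℕ → A // WNomega k α} | ∀ j < N, β.1 j = α.1 j}, ?_, ?_, ?_⟩
    · intro β hβ
      have hspecβ := Classical.choose_spec β.2
      have hst := stability (k := k) (x := Classical.choose α.2)
        (y := Classical.choose β.2) (α := α.1) (β := β.1) (N := N)
        hspecα.1 hspecβ.1 hspecα.2 hspecβ.2
        (fun j hj => (hβ j hj).symm) le_rfl i le_rfl
      simp only [Set.mem_preimage, Set.mem_singleton_iff] at hα ⊢
      rw [← hα]
      exact Subtype.ext hst.symm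
    · have : {β : {α : ℕ → A // WNomega k α} | ∀ j < N, β.1 j = α.1 j} =
          ⋂ j ∈ Finset.range N, {β : {α : ℕ → A // WNomega k α} | β.1 j = α.1 j} := by
        ext β; simp
      rw [this]
      apply isOpen_biInter_finset
      intro j _
      have hc : Continuous (fun β : {α : ℕ → A // WNomega k α} => β.1 j) :=
        (continuous_apply j).comp continuous_subtype_val
      exact hc.isOpen_preimage {α.1 j} (isOpen_discrete _)
    · intro j _; rfl
  refine ⟨⟨⟨toF, invF, left_inv, right_inv⟩, cont_to, cont_inv⟩, ?_, ?_⟩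
  · intro x
    exact conc_concats x
  · intro hc hi
    obtain ⟨d⟩ := nonempty_denumerable S
    let e : S ≃ ℕ := Denumerable.eqv S
    have hhe : Continuous (e : S → ℕ) := continuous_of_discreteTopology
    have hhe' : Continuous (e.symm : ℕ → S) := continuous_of_discreteTopology
    exact ⟨(Homeomorph.symm ⟨⟨toF, invF, left_inv, right_inv⟩, cont_to, cont_inv⟩).trans
      (Homeomorph.piCongrRight fun _ => ⟨e, hhe, hhe'⟩)⟩
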